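/- Equality in the uncertainty relation ‖(A-a)u‖·‖(B-b)u‖ = (1/2)·|⟨(AB-BA)u, u⟩| holds if (A-a)u + i·r·(B-b)u = 0 for some real r. -/

import Mathlib

open scoped ComplexInnerProductSpace

theorem uncertainty_equality_of_annihilation
    {H : Type*} [NormedAddCommGroup H] [InnerProductSpace ℂ H] [CompleteSpace H]
    (A B : H →L[ℂ] H) (hA : IsSelfAdjoint A) (hB : IsSelfAdjoint B)
    (a b : ℝ) (u : H)
    (h : ∃ r : ℝ, (A - (a : ℂ) • 1) u + ((Complex.I * r) : ℂ) • (B - (b : ℂ) • 1) u = 0) :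
    ‖(A - (a : ℂ) • 1) u‖ * ‖(B - (b : ℂ) • 1) u‖ =
      (1 / 2) * ‖⟪(A ∘L B - B ∘L A) u, u⟫‖ := by
  obtain ⟨r, hr⟩ := h
  set x := (A - (a : ℂ) • 1) u with hxdef
  set y := (B - (b : ℂ) • 1) u with hydef
  have hAs := (ContinuousLinearMap.isSelfAdjoint_iff_isSymmetric.mp hA)
  have hBs := (ContinuousLinearMap.isSelfAdjoint_iff_isSymmetric.mp hB)
  have hx : x = (-(Complex.I * r)) • y := by
    rw [neg_smul, eq_neg_iff_add_eq_zero]; exact hr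
  have key : ⟪(A ∘L B - B ∘L A) u, u⟫ = ⟪y, x⟫ - ⟪x, y⟫ := by
    have h1 : ⟪A (B u), u⟫ = ⟪B u, A u⟫ := hAs (B u) u
    have h2 : ⟪B (A u), u⟫ = ⟪A u, B u⟫ := hBs (A u) u
    have hAu : ⟪A u, u⟫ = ⟪u, A u⟫ := hAs u u
    have hBu : ⟪B u, u⟫ = ⟪u, B u⟫ := hBs u u
    simp only [hxdef, hydef, ContinuousLinearMap.sub_apply, ContinuousLinearMap.smul_apply,
      ContinuousLinearMap.one_apply, ContinuousLinearMap.coe_sub', Pi.sub_apply,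
      ContinuousLinearMap.coe_comp', Function.comp_apply,
      inner_sub_left, inner_sub_right, inner_smul_left, inner_smul_right, Complex.conj_ofReal]
    rw [h1, h2, hAu, hBu]
    ring
  have hnx : ‖x‖ = |r| * ‖y‖ := by
    rw [hx, norm_smul]
    simp [Complex.norm_def, Complex.normSq_mk]
  have hyy : (⟪y, y⟫ : ℂ) = ((‖y‖^2 : ℝ) : ℂ) := by
    exact_mod_cast inner_self_eq_norm_sq_to_K (𝕜 := ℂ) y
  have hval : ⟪(A ∘L B - B ∘L A) u, u⟫ = -(2 * Complex.I * r) * ((‖y‖^2 : ℝ) : ℂ) := by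
    rw [key, hx, inner_smul_right, inner_smul_left, hyy]
    rw [map_neg, map_mul, Complex.conj_I, Complex.conj_ofReal]
    ring
  rw [hval]
  have habs : ‖(-(2 * Complex.I * r) * ((‖y‖^2 : ℝ) : ℂ))‖ = 2 * |r| * ‖y‖^2 := by
    rw [norm_mul, norm_neg, norm_mul, norm_mul]
    simp [abs_of_nonneg (sq_nonneg ‖y‖)]
  rw [habs, hnx]
  ring
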